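/- Let p be a prime, r ≥ 1, and let A be a commutative ring containing F_p. Let E ⊂ A be an F_p-subspace of dimension r with basis x₁,…,x_r consisting of algebraically independent elements (e.g., A = F_p[x₁,…,x_r]). Then ∑_{u ∈ E} u^(p^r − 1) = ∏_{u ∈ E \ {0}} u. -/

import Mathlib

open Polynomial Finset

/-- For a finite additive-subgroup-like `s` in a field, `∑_{u∈s} u^(|s|-1) = ∏_{v∈s, v≠0} (0-v)`. -/
lemma sum_pow_eq_prod_aux {K : Type*} [Field K] [DecidableEq K] (s : Finset K) (h0 : (0:K) ∈ s)
    (hsub : ∀ a ∈ s, ∀ b ∈ s, a - b ∈ s) (m : ℕ) (hm : s.card = m + 1) :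
    ∑ u ∈ s, u ^ m = ∏ v ∈ s.erase 0, (0 - v) := by
  classical
  set c : K := ∏ v ∈ s.erase 0, (0 - v) with hc
  -- constancy of ∏_{v ∈ s.erase u} (u - v)
  have hkey : ∀ u ∈ s, ∏ v ∈ s.erase u, (u - v) = c := by
    intro u hu
    rw [hc]
    refine Finset.prod_bij' (fun v _ => v - u) (fun v _ => v + u) ?_ ?_ ?_ ?_ ?_
    · intro a ha
      rw [Finset.mem_erase] at ha ⊢
      exact ⟨sub_ne_zero.mpr ha.1, hsub a ha.2 u hu⟩
    · intro a ha
      rw [Finset.mem_erase] at ha ⊢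
      constructor
      · intro h; apply ha.1; rwa [← sub_eq_zero, add_sub_cancel_right] at h
      · show a + u ∈ s
        have h2 : a + u = a - (0 - u) := by ring
        rw [h2]
        exact hsub a ha.2 _ (hsub 0 h0 u hu)
    · intro a _; ring
    · intro a _; ring
    · intro a _; ring
  have hc0 : c ≠ 0 := by
    rw [hc]
    refine Finset.prod_ne_zero_iff.mpr ?_
    intro v hv
    rw [Finset.mem_erase] at hv
    intro h
    rw [sub_eq_zero] at h
    exact hv.1 h.symm
  -- Lagrange-type polynomial identity
  set P : K[X] := ∑ u ∈ s, Polynomial.C (u ^ m) * ∏ v ∈ s.erase u, (X - Polynomial.C v) with hP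
  set Q : K[X] := Polynomial.C c * X ^ m with hQ
  have hcard_erase : ∀ u ∈ s, (s.erase u).card = m := by
    intro u hu
    rw [Finset.card_erase_of_mem hu, hm]; simp
  have hmonic : ∀ u : K, ((s.erase u).prod fun v => X - Polynomial.C v).Monic :=
    fun u => monic_prod_of_monic _ _ fun v _ => monic_X_sub_C v
  have hdeg : ∀ u ∈ s, ((s.erase u).prod fun v => X - Polynomial.C v).natDegree = m := by
    intro u hu
    rw [natDegree_prod_of_monic _ _ fun v _ => monic_X_sub_C v]
    simp [hcard_erase u hu]
  have heval : ∀ t ∈ s, (P - Q).eval t = 0 := by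
    intro t ht
    have hPt : P.eval t = t ^ m * c := by
      rw [hP]
      rw [Polynomial.eval_finset_sum]
      rw [Finset.sum_eq_single t]
      · rw [Polynomial.eval_mul, Polynomial.eval_C, Polynomial.eval_prod]
        simp only [Polynomial.eval_sub, Polynomial.eval_X, Polynomial.eval_C]
        rw [hkey t ht]
      · intro u hu hut
        rw [Polynomial.eval_mul, Polynomial.eval_prod]
        have : t ∈ s.erase u := Finset.mem_erase.mpr ⟨fun h => hut h.symm, ht⟩
        rw [Finset.prod_eq_zero this]
        · ring
        · simp
      · intro h; exact absurd ht h
    have hQt : Q.eval t = c * t ^ m := by simp [hQ]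
    rw [Polynomial.eval_sub, hPt, hQt]; ring
  have hPQ : P = Q := by
    have hdegP : P.natDegree ≤ m := by
      rw [hP]
      refine Polynomial.natDegree_sum_le_of_forall_le _ _ ?_
      intro u hu
      refine le_trans (Polynomial.natDegree_mul_le) ?_
      simp [hdeg u hu]
    have hdegQ : Q.natDegree ≤ m := by
      rw [hQ]
      refine le_trans (Polynomial.natDegree_mul_le) ?_
      simp
    have hz := Polynomial.eq_zero_of_natDegree_lt_card_of_eval_eq_zero' (P - Q) s heval
      (by
        refine lt_of_le_of_lt (Polynomial.natDegree_sub_le _ _) ?_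
        rw [hm]
        exact Nat.lt_succ_of_le (max_le hdegP hdegQ))
    exact sub_eq_zero.mp hz
  -- compare coefficients at m
  have := congrArg (fun f : K[X] => f.coeff m) hPQ
  simp only [hP, hQ] at this
  rw [Polynomial.finset_sum_coeff] at this
  have hco : ∀ u ∈ s, (Polynomial.C (u ^ m) * ∏ v ∈ s.erase u, (X - Polynomial.C v)).coeff m = u ^ m := by
    intro u hu
    rw [Polynomial.coeff_C_mul]
    have : ((s.erase u).prod fun v => X - Polynomial.C v).coeff m = 1 := by
      have h1 := (hmonic u).coeff_natDegree
      rwa [hdeg u hu] at h1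
    rw [this, mul_one]
  rw [Finset.sum_congr rfl hco] at this
  rw [this]
  simp [Polynomial.coeff_C_mul, Polynomial.coeff_X_pow]

/-- Let `p` be a prime, `r ≥ 1`, `A` a commutative ring containing `𝔽_p` and
`x₁, …, x_r ∈ A` algebraically independent over `𝔽_p`.  With `E` the set of
`𝔽_p`-linear combinations of the `xᵢ`, one has
`∑_{u ∈ E} u ^ (p^r - 1) = ∏_{u ∈ E, u ≠ 0} u`. -/
theorem stmt_17 (p r : ℕ) [Fact p.Prime] (hr : 1 ≤ r)
    {A : Type*} [CommRing A] [Algebra (ZMod p) A]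
    (x : Fin r → A) (hx : AlgebraicIndependent (ZMod p) x) :
    ∑ w : Fin r → ZMod p, (∑ i, w i • x i) ^ (p ^ r - 1) =
      ∏ w ∈ Finset.univ.filter (fun w : Fin r → ZMod p => w ≠ 0),
        ∑ i, w i • x i := by
  classical
  have hp : p.Prime := Fact.out
  set m : ℕ := p ^ r - 1 with hmdef
  set R := MvPolynomial (Fin r) (ZMod p) with hR
  let K := FractionRing R
  let ψ : R →+* K := algebraMap R K
  have hψ : Function.Injective ψ := IsFractionRing.injective R K
  set L : (Fin r → ZMod p) → R := fun w => ∑ i, w i • MvPolynomial.X i with hLdef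
  -- coefficient extraction
  have hLcoeff : ∀ (w : Fin r → ZMod p) (i : Fin r),
      MvPolynomial.coeff (Finsupp.single i 1) (L w) = w i := by
    intro w i
    rw [hLdef]
    simp only []
    rw [MvPolynomial.coeff_sum]
    rw [Finset.sum_eq_single i]
    · rw [MvPolynomial.coeff_smul, MvPolynomial.coeff_X, smul_eq_mul, if_pos rfl, mul_one]
    · intro j _ hji
      rw [MvPolynomial.coeff_smul, MvPolynomial.coeff_X', if_neg, smul_zero]
      intro h
      exact hji (by
        have := Finsupp.single_left_injective (one_ne_zero) h
        exact this)
    · intro h; exact absurd (Finset.mem_univ i) h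
  have hLlin : ∀ a b : Fin r → ZMod p, L a - L b = L (a - b) := by
    intro a b
    rw [hLdef]
    simp only []
    rw [← Finset.sum_sub_distrib]
    refine Finset.sum_congr rfl fun i _ => ?_
    rw [← sub_smul]
    rfl
  set φ : (Fin r → ZMod p) → K := fun w => ψ (L w) with hφdef
  have hinj : Function.Injective φ := by
    intro a b hab
    have h1 : L a = L b := hψ hab
    funext i
    have := congrArg (MvPolynomial.coeff (Finsupp.single i 1)) h1
    rwa [hLcoeff, hLcoeff] at this
  have hφ0 : φ 0 = 0 := by
    rw [hφdef]
    simp only []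
    have : L 0 = 0 := by
      rw [hLdef]; simp
    rw [this, map_zero]
  set s : Finset K := Finset.image φ Finset.univ with hsdef
  have h0s : (0:K) ∈ s := by
    rw [hsdef]
    exact Finset.mem_image.mpr ⟨0, Finset.mem_univ _, hφ0⟩
  have hsub : ∀ a ∈ s, ∀ b ∈ s, a - b ∈ s := by
    intro a ha b hb
    rw [hsdef, Finset.mem_image] at ha hb ⊢
    obtain ⟨wa, -, rfl⟩ := ha
    obtain ⟨wb, -, rfl⟩ := hb
    exact ⟨wa - wb, Finset.mem_univ _, by rw [hφdef]; simp only []; rw [← hLlin, map_sub]⟩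
  have hcards : s.card = m + 1 := by
    rw [hsdef, Finset.card_image_of_injective _ hinj, Finset.card_univ, Fintype.card_fun,
      ZMod.card, Fintype.card_fin, hmdef]
    have : 0 < p ^ r := pow_pos hp.pos r
    omega
  have key := sum_pow_eq_prod_aux s h0s hsub m hcards
  -- sign
  have hsign : ∀ v : K, (0:K) - v = (-1) * v := by intro v; ring
  have hneg1 : ((-1 : K)) ^ m = 1 := by
    have hz : ((-1 : ZMod p)) ^ m = 1 := by
      rcases eq_or_ne p 2 with h2 | h2
      · subst h2
        have h21 : (-1 : ZMod 2) = 1 := rfl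
        rw [h21, one_pow]
      · have hodd : Odd p := hp.odd_of_ne_two h2
        have : Even m := by
          rw [hmdef]
          exact Nat.Odd.sub_odd (hodd.pow) odd_one
        exact this.neg_one_pow
    have := congrArg (ψ.comp (algebraMap (ZMod p) R)) hz
    simpa using this
  have key2 : ∑ u ∈ s, u ^ m = ∏ v ∈ s.erase 0, v := by
    rw [key]
    rw [Finset.prod_congr rfl fun v _ => hsign v, Finset.prod_mul_distrib,
      Finset.prod_const]
    have hcarde : (s.erase 0).card = m := by
      rw [Finset.card_erase_of_mem h0s, hcards]; simp
    rw [hcarde, hneg1, one_mul]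
  -- rewrite both sides as images
  have hsumim : ∑ u ∈ s, u ^ m = ∑ w : Fin r → ZMod p, (φ w) ^ m := by
    rw [hsdef]
    rw [Finset.sum_image fun a _ b _ h => hinj h]
  have herase : s.erase 0 = Finset.image φ (Finset.univ.filter (fun w => w ≠ 0)) := by
    ext t
    simp only [Finset.mem_erase, hsdef, Finset.mem_image, Finset.mem_filter, Finset.mem_univ,
      true_and]
    constructor
    · rintro ⟨ht0, w, rfl⟩
      exact ⟨w, fun h => ht0 (by rw [h, hφ0]), rfl⟩
    · rintro ⟨w, hw0, rfl⟩
      exact ⟨fun h => hw0 (hinj (h.trans hφ0.symm)), w, rfl⟩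
  have hprodim : ∏ v ∈ s.erase 0, v
      = ∏ w ∈ Finset.univ.filter (fun w : Fin r → ZMod p => w ≠ 0), φ w := by
    rw [herase, Finset.prod_image]
    intro a _ b _ h
    exact hinj h
  -- identity in K, expressed via ψ
  have hK : ψ (∑ w : Fin r → ZMod p, (L w) ^ m)
      = ψ (∏ w ∈ Finset.univ.filter (fun w : Fin r → ZMod p => w ≠ 0), L w) := by
    rw [map_sum, map_prod]
    simp only [map_pow]
    rw [← hsumim, ← hprodim, key2]
  have hRid : (∑ w : Fin r → ZMod p, (L w) ^ m)
      = ∏ w ∈ Finset.univ.filter (fun w : Fin r → ZMod p => w ≠ 0), L w := hψ hK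
  -- specialize via aeval
  let θ : R →ₐ[ZMod p] A := MvPolynomial.aeval x
  have hθL : ∀ w : Fin r → ZMod p, θ (L w) = ∑ i, w i • x i := by
    intro w
    rw [hLdef]
    simp only []
    rw [map_sum]
    refine Finset.sum_congr rfl fun i _ => ?_
    rw [map_smul, MvPolynomial.aeval_X]
  have := congrArg θ hRid
  rw [map_sum, map_prod] at this
  simp only [map_pow, hθL] at this
  exact this
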